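/- (Payne–Thas) Let O be a pseudo-ovoid of PG(4n−1,q). Then: (i) every hyperplane of PG(4n−1,q) that does not contain the tangent space of O at any element of O contains exactly q^n + 1 elements of O (i.e., exactly q^n + 1 members of O are subspaces of it); and (ii) every 1-dimensional subspace of F_q^{4n} that is not contained in any element of O is contained in exactly q^n + 1 tangent spaces of O. -/

import Mathlib

open Finset Module
open scoped Classical

variable {n q : ℕ} {F : Type} [Field F] [Fintype F]


lemma card_mem_submodule (hq : Fintype.card F = q) (U : Submodule F (Fin (4 * n) → F)) :
    (Finset.univ.filter (· ∈ U)).card = q ^ (finrank F U) := by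
  rw [(Fintype.card_subtype _).symm, ← hq]
  exact card_eq_pow_finrank (K := F)

lemma card_mem_submodule_nz (hq : Fintype.card F = q) (U : Submodule F (Fin (4 * n) → F)) :
    (Finset.univ.filter (fun v => v ∈ U ∧ v ≠ 0)).card + 1 = q ^ (finrank F U) := by
  rw [← card_mem_submodule hq U]
  have : (Finset.univ.filter (· ∈ U)) =
      (Finset.univ.filter (fun v => v ∈ U ∧ v ≠ 0)) ∪ {0} := by
    ext v; simp only [mem_filter, mem_univ, true_and, mem_union, mem_singleton]
    by_cases h : v = 0 <;> simp [h, U.zero_mem]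
  rw [this, Finset.card_union_of_disjoint (by simp), Finset.card_singleton]

lemma master_count (hq : Fintype.card F = q)
    (O : Finset (Submodule F (Fin (4 * n) → F)))
    (hdisj : ∀ π ∈ O, ∀ π' ∈ O, π ≠ π' → π ⊓ π' = ⊥)
    (W : Submodule F (Fin (4 * n) → F)) :
    (Finset.univ.filter (fun v : Fin (4 * n) → F => (v ≠ 0 ∧ ∀ π ∈ O, v ∉ π) ∧ v ∈ W)).card
      + (∑ π ∈ O, q ^ (finrank F ↥(π ⊓ W))) + 1
    = q ^ (finrank F W) + O.card := by
  classical
  -- split the elements of W into: those in some π (nonzero), those in none (nonzero), zero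
  have key : (Finset.univ.filter (fun v : Fin (4 * n) → F => v ∈ W ∧ v ≠ 0)).card
      = (Finset.univ.filter (fun v : Fin (4 * n) → F => (v ≠ 0 ∧ ∀ π ∈ O, v ∉ π) ∧ v ∈ W)).card
        + (Finset.univ.filter (fun v : Fin (4 * n) → F => (v ∈ W ∧ v ≠ 0) ∧ ∃ π ∈ O, v ∈ π)).card := by
    rw [← Finset.card_filter_add_card_filter_not
      (p := fun v : Fin (4 * n) → F => ∃ π ∈ O, v ∈ π) (s := Finset.univ.filter (fun v : Fin (4 * n) → F => v ∈ W ∧ v ≠ 0))]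
    rw [Finset.filter_filter, Finset.filter_filter, add_comm]
    congr 2 <;> (ext v; simp only [mem_filter, mem_univ, true_and, not_exists]; tauto)
  have union_eq : (Finset.univ.filter (fun v : Fin (4 * n) → F => (v ∈ W ∧ v ≠ 0) ∧ ∃ π ∈ O, v ∈ π))
      = O.biUnion (fun π => Finset.univ.filter (fun v : Fin (4 * n) → F => v ∈ π ⊓ W ∧ v ≠ 0)) := by
    ext v
    simp only [mem_filter, mem_univ, true_and, mem_biUnion, Submodule.mem_inf]
    tauto
  have cardU : (Finset.univ.filter (fun v : Fin (4 * n) → F => (v ∈ W ∧ v ≠ 0) ∧ ∃ π ∈ O, v ∈ π)).card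
      = ∑ π ∈ O, (Finset.univ.filter (fun v : Fin (4 * n) → F => v ∈ π ⊓ W ∧ v ≠ 0)).card := by
    rw [union_eq]
    apply Finset.card_biUnion
    intro π hπ π' hπ' hne
    rw [Function.onFun, Finset.disjoint_left]
    intro v hv hv'
    simp only [mem_filter, mem_univ, true_and, Submodule.mem_inf] at hv hv'
    have : v ∈ π ⊓ π' := Submodule.mem_inf.2 ⟨hv.1.1, hv'.1.1⟩
    rw [hdisj π hπ π' hπ' hne] at this
    exact hv.2 this
  have sum_eq : ∑ π ∈ O, ((Finset.univ.filter (fun v : Fin (4 * n) → F => v ∈ π ⊓ W ∧ v ≠ 0)).card + 1)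
      = ∑ π ∈ O, q ^ (finrank F ↥(π ⊓ W)) :=
    Finset.sum_congr rfl (fun π _ => card_mem_submodule_nz hq (π ⊓ W))
  rw [Finset.sum_add_distrib, Finset.sum_const, smul_eq_mul, mul_one] at sum_eq
  have hW := card_mem_submodule_nz hq W
  omega

lemma finrank_V : finrank F (Fin (4 * n) → F) = 4 * n := Module.finrank_fin_fun F

lemma sup_dim_le (A B : Submodule F (Fin (4 * n) → F)) :
    finrank F ↥(A ⊔ B) ≤ 4 * n :=
  le_trans (Submodule.finrank_le _) (le_of_eq (finrank_V))

lemma hyperplane_inter (H U : Submodule F (Fin (4 * n) → F)) (hH : finrank F H = 4 * n - 1)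
    (hn : 1 ≤ n) (hU : ¬ U ≤ H) :
    finrank F ↥(U ⊓ H) + 1 = finrank F U := by
  have hlt : H < U ⊔ H := by
    rcases lt_or_eq_of_le (le_sup_right : H ≤ U ⊔ H) with h | h
    · exact h
    · exact absurd (le_trans (le_sup_left : U ≤ U ⊔ H) h.symm.le) hU
  have h1 : 4 * n - 1 < finrank F ↥(U ⊔ H) := by
    rw [← hH]; exact Submodule.finrank_lt_finrank_of_lt hlt
  have h2 := sup_dim_le U H
  have h3 : finrank F ↥(U ⊔ H) = 4 * n := by omega
  have h4 := Submodule.finrank_sup_add_finrank_inf_eq U H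
  rw [h3, hH] at h4
  omega

section Ovoid

variable {O : Finset (Submodule F (Fin (4 * n) → F))} {τ : Submodule F (Fin (4 * n) → F) → Submodule F (Fin (4 * n) → F)}
variable (hq : Fintype.card F = q)
variable (hdim : ∀ W ∈ O, finrank F W = n)
variable (htan : ∀ π ∈ O, finrank F (τ π) = 3 * n ∧ π ≤ τ π ∧
    ∀ π' ∈ O, π' ≠ π → τ π ⊓ π' = ⊥)

include htan in
lemma ovoid_disj : ∀ π ∈ O, ∀ π' ∈ O, π ≠ π' → π ⊓ π' = ⊥ := by
  intro π hπ π' hπ' hne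
  have h := (htan π' hπ').2.2 π hπ hne
  rw [← le_bot_iff, ← h]
  calc π ⊓ π' ≤ τ π' ⊓ π := by
        rw [inf_comm]; exact inf_le_inf_right _ (htan π' hπ').2.1
    _ ≤ τ π' ⊓ π := le_rfl

include htan hdim in
lemma tangent_inter_dim : ∀ π ∈ O, ∀ π' ∈ O, π ≠ π' →
    finrank F ↥(τ π ⊓ τ π') = 2 * n := by
  intro π hπ π' hπ' hne
  have hτπ := htan π hπ
  have hτπ' := htan π' hπ'
  -- upper bound
  have hAπ' : (τ π ⊓ τ π') ⊓ π' = ⊥ := by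
    rw [← le_bot_iff, ← hτπ.2.2 π' hπ' (Ne.symm hne)]
    exact inf_le_inf_right _ inf_le_left
  have hsub : (τ π ⊓ τ π') ⊔ π' ≤ τ π' := sup_le inf_le_right hτπ'.2.1
  have h1 := Submodule.finrank_sup_add_finrank_inf_eq (τ π ⊓ τ π') π'
  rw [hAπ'] at h1
  have hb : finrank F (⊥ : Submodule F (Fin (4 * n) → F)) = 0 := finrank_bot F _
  have h2 : finrank F ↥((τ π ⊓ τ π') ⊔ π') ≤ 3 * n := by
    rw [← hτπ'.1]; exact Submodule.finrank_mono hsub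
  have hd' : finrank F ↥π' = n := hdim π' hπ'
  -- lower bound
  have h3 := Submodule.finrank_sup_add_finrank_inf_eq (τ π) (τ π')
  have h4 := sup_dim_le (τ π) (τ π')
  rw [hτπ.1, hτπ'.1] at h3
  omega

include htan in
lemma tangent_inter_avoid : ∀ π ∈ O, ∀ π' ∈ O, π ≠ π' → ∀ π'' ∈ O,
    (τ π ⊓ τ π') ⊓ π'' = ⊥ := by
  intro π hπ π' hπ' hne π'' hπ''
  by_cases h : π'' = π
  · subst h
    rw [← le_bot_iff, ← (htan π' hπ').2.2 π'' hπ'' hne]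
    exact inf_le_inf_right _ inf_le_right
  · rw [← le_bot_iff, ← (htan π hπ).2.2 π'' hπ'' h]
    exact inf_le_inf_right _ inf_le_left

include hq hdim htan in
lemma c_tan (π : Submodule F (Fin (4 * n) → F)) (hπ : π ∈ O) :
    (Finset.univ.filter (fun v : Fin (4 * n) → F =>
      (v ≠ 0 ∧ ∀ π' ∈ O, v ∉ π') ∧ v ∈ τ π)).card + q ^ n = q ^ (3 * n) := by
  have hm := master_count hq O (ovoid_disj htan) (τ π)
  have hsum : ∑ π' ∈ O, q ^ (finrank F ↥(π' ⊓ τ π)) = q ^ n + (O.card - 1) := by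
    rw [Finset.sum_eq_sum_sdiff_singleton_add hπ]
    have h1 : ∀ π' ∈ O \ {π}, q ^ (finrank F ↥(π' ⊓ τ π)) = 1 := by
      intro π' hπ'
      rw [Finset.mem_sdiff, Finset.mem_singleton] at hπ'
      have : π' ⊓ τ π = ⊥ := by
        rw [inf_comm]; exact (htan π hπ).2.2 π' hπ'.1 hπ'.2
      rw [this, finrank_bot, pow_zero]
    rw [Finset.sum_congr rfl h1, Finset.sum_const, smul_eq_mul, mul_one,
      Finset.card_sdiff_of_subset (by simpa using hπ), Finset.card_singleton]
    have : π ⊓ τ π = π := inf_eq_left.2 (htan π hπ).2.1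
    rw [this, hdim π hπ, add_comm]
  rw [hsum, (htan π hπ).1] at hm
  have hO1 : 1 ≤ O.card := Finset.card_pos.2 ⟨π, hπ⟩
  omega

include hq hdim htan in
lemma c_two (π π' : Submodule F (Fin (4 * n) → F)) (hπ : π ∈ O) (hπ' : π' ∈ O)
    (hne : π ≠ π') :
    (Finset.univ.filter (fun v : Fin (4 * n) → F =>
      (v ≠ 0 ∧ ∀ π'' ∈ O, v ∉ π'') ∧ v ∈ τ π ⊓ τ π')).card + 1 = q ^ (2 * n) := by
  have hm := master_count hq O (ovoid_disj htan) (τ π ⊓ τ π')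
  have hsum : ∑ π'' ∈ O, q ^ (finrank F ↥(π'' ⊓ (τ π ⊓ τ π'))) = O.card := by
    have h1 : ∀ π'' ∈ O, q ^ (finrank F ↥(π'' ⊓ (τ π ⊓ τ π'))) = 1 := by
      intro π'' hπ''
      have : π'' ⊓ (τ π ⊓ τ π') = ⊥ := by
        rw [inf_comm]; exact tangent_inter_avoid htan π hπ π' hπ' hne π'' hπ''
      rw [this, finrank_bot, pow_zero]
    rw [Finset.sum_congr rfl h1, Finset.sum_const, smul_eq_mul, mul_one]
  rw [hsum, tangent_inter_dim hdim htan π hπ π' hπ' hne] at hm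
  omega

include hq hdim htan in
lemma c_total :
    (Finset.univ.filter (fun v : Fin (4 * n) → F =>
      v ≠ 0 ∧ ∀ π ∈ O, v ∉ π)).card + O.card * q ^ n + 1
      = q ^ (4 * n) + O.card := by
  have hm := master_count hq O (ovoid_disj htan) (⊤ : Submodule F (Fin (4 * n) → F))
  have hsum : ∑ π ∈ O, q ^ (finrank F ↥(π ⊓ (⊤ : Submodule F (Fin (4 * n) → F))))
      = O.card * q ^ n := by
    rw [Finset.sum_congr rfl (fun π hπ => by rw [inf_top_eq, hdim π hπ]),
      Finset.sum_const, smul_eq_mul]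
  have htop : finrank F (⊤ : Submodule F (Fin (4 * n) → F)) = 4 * n := by
    rw [finrank_top]; exact finrank_V
  rw [hsum, htop] at hm
  have hfilter : (Finset.univ.filter (fun v : Fin (4 * n) → F =>
      (v ≠ 0 ∧ ∀ π ∈ O, v ∉ π) ∧ v ∈ (⊤ : Submodule F (Fin (4 * n) → F))))
      = (Finset.univ.filter (fun v : Fin (4 * n) → F => v ≠ 0 ∧ ∀ π ∈ O, v ∉ π)) := by
    ext v; simp
  rw [hfilter] at hm
  omega

include hq hdim htan in
lemma tangent_count (hcard : O.card = q ^ (2 * n) + 1) :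
    ∀ v : Fin (4 * n) → F, v ≠ 0 → (∀ π ∈ O, v ∉ π) →
    (O.filter fun π => v ∈ τ π).card = q ^ n + 1 := by
  classical
  set S : Finset (Fin (4 * n) → F) :=
    Finset.univ.filter (fun v => v ≠ 0 ∧ ∀ π ∈ O, v ∉ π) with hS
  set t : (Fin (4 * n) → F) → ℕ := fun v => (O.filter fun π => v ∈ τ π).card with ht
  -- the three basic counts
  have key0 : S.card + O.card * q ^ n + 1 = q ^ (4 * n) + O.card :=
    c_total hq hdim htan
  have hfilt : ∀ W : Submodule F (Fin (4 * n) → F),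
      S.filter (fun v => v ∈ W) = Finset.univ.filter
        (fun v : Fin (4 * n) → F => (v ≠ 0 ∧ ∀ π ∈ O, v ∉ π) ∧ v ∈ W) := by
    intro W; rw [hS, Finset.filter_filter]
  -- double counting: sum of t over S
  have dc1 : ∑ v ∈ S, t v = ∑ π ∈ O, (S.filter (fun v => v ∈ τ π)).card := by
    simp only [ht, Finset.card_filter]
    exact Finset.sum_comm
  have key1 : ∑ v ∈ S, t v + O.card * q ^ n = O.card * q ^ (3 * n) := by
    rw [dc1]
    have : ∀ π ∈ O, (S.filter (fun v => v ∈ τ π)).card + q ^ n = q ^ (3 * n) := by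
      intro π hπ; rw [hfilt]; exact c_tan hq hdim htan π hπ
    calc ∑ π ∈ O, (S.filter (fun v => v ∈ τ π)).card + O.card * q ^ n
        = ∑ π ∈ O, ((S.filter (fun v => v ∈ τ π)).card + q ^ n) := by
          rw [Finset.sum_add_distrib, Finset.sum_const, smul_eq_mul]
      _ = ∑ π ∈ O, q ^ (3 * n) := Finset.sum_congr rfl this
      _ = O.card * q ^ (3 * n) := by rw [Finset.sum_const, smul_eq_mul]
  -- sum of squares
  have dc2 : ∑ v ∈ S, t v * t v
      = ∑ π ∈ O, ∑ π' ∈ O, (S.filter (fun v => v ∈ τ π ⊓ τ π')).card := by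
    have h1 : ∀ v, t v * t v = ∑ π ∈ O, ∑ π' ∈ O,
        (if v ∈ τ π ⊓ τ π' then 1 else 0) := by
      intro v
      rw [ht]
      simp only [Finset.card_filter]
      rw [Finset.sum_mul_sum]
      refine Finset.sum_congr rfl fun π _ => Finset.sum_congr rfl fun π' _ => ?_
      by_cases h1 : v ∈ τ π <;> by_cases h2 : v ∈ τ π' <;>
        simp [h1, h2, Submodule.mem_inf]
    rw [Finset.sum_congr rfl (fun v _ => h1 v)]
    rw [Finset.sum_comm]
    refine Finset.sum_congr rfl fun π _ => ?_
    rw [Finset.sum_comm]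
    refine Finset.sum_congr rfl fun π' _ => ?_
    rw [Finset.card_filter]
  have key2 : ∑ v ∈ S, t v * t v + O.card * q ^ n + O.card * (O.card - 1)
      = O.card * q ^ (3 * n) + O.card * (O.card - 1) * q ^ (2 * n) := by
    rw [dc2]
    have hrow : ∀ π ∈ O, ∑ π' ∈ O, (S.filter (fun v => v ∈ τ π ⊓ τ π')).card
        + q ^ n + (O.card - 1) = q ^ (3 * n) + (O.card - 1) * q ^ (2 * n) := by
      intro π hπ
      rw [Finset.sum_eq_sum_sdiff_singleton_add hπ]
      have hdiag : (S.filter (fun v => v ∈ τ π ⊓ τ π)).card + q ^ n = q ^ (3 * n) := by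
        have : (S.filter (fun v => v ∈ τ π ⊓ τ π)) = S.filter (fun v => v ∈ τ π) := by
          refine Finset.filter_congr fun v _ => by simp
        rw [this, hfilt]
        exact c_tan hq hdim htan π hπ
      have hoff : ∑ π' ∈ O \ {π}, ((S.filter (fun v => v ∈ τ π ⊓ τ π')).card + 1)
          = (O.card - 1) * q ^ (2 * n) := by
        have h2 : ∀ π' ∈ O \ {π},
            (S.filter (fun v => v ∈ τ π ⊓ τ π')).card + 1 = q ^ (2 * n) := by
          intro π' hπ'
          rw [Finset.mem_sdiff, Finset.mem_singleton] at hπ'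
          rw [hfilt]
          exact c_two hq hdim htan π π' hπ hπ'.1 (Ne.symm hπ'.2)
        rw [Finset.sum_congr rfl h2, Finset.sum_const, smul_eq_mul,
          Finset.card_sdiff_of_subset (by simpa using hπ), Finset.card_singleton]
      rw [Finset.sum_add_distrib, Finset.sum_const, smul_eq_mul, mul_one,
        Finset.card_sdiff_of_subset (by simpa using hπ), Finset.card_singleton] at hoff
      omega
    calc ∑ π ∈ O, (∑ π' ∈ O, (S.filter (fun v => v ∈ τ π ⊓ τ π')).card)
          + O.card * q ^ n + O.card * (O.card - 1)
        = ∑ π ∈ O, (∑ π' ∈ O, (S.filter (fun v => v ∈ τ π ⊓ τ π')).card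
            + q ^ n + (O.card - 1)) := by
          rw [Finset.sum_add_distrib, Finset.sum_add_distrib, Finset.sum_const,
            Finset.sum_const, smul_eq_mul, smul_eq_mul]
      _ = ∑ π ∈ O, (q ^ (3 * n) + (O.card - 1) * q ^ (2 * n)) :=
          Finset.sum_congr rfl hrow
      _ = O.card * q ^ (3 * n) + O.card * ((O.card - 1) * q ^ (2 * n)) := by
          rw [Finset.sum_add_distrib, Finset.sum_const, Finset.sum_const,
            smul_eq_mul, smul_eq_mul]
      _ = O.card * q ^ (3 * n) + O.card * (O.card - 1) * q ^ (2 * n) := by ring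
  -- pass to ℤ and do the variance argument
  rw [hcard] at key0 key1
  rw [hcard] at key2
  simp only [Nat.add_sub_cancel] at key2
  set X : ℤ := (q : ℤ) ^ n with hX
  have hp2 : ((q : ℤ)) ^ (2 * n) = X ^ 2 := by rw [hX, ← pow_mul, mul_comm]
  have hp3 : ((q : ℤ)) ^ (3 * n) = X ^ 3 := by rw [hX, ← pow_mul, mul_comm]
  have hp4 : ((q : ℤ)) ^ (4 * n) = X ^ 4 := by rw [hX, ← pow_mul, mul_comm]
  have zkey0 : (S.card : ℤ) + (X ^ 2 + 1) * X + 1 = X ^ 4 + (X ^ 2 + 1) := by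
    have := congrArg (fun m : ℕ => (m : ℤ)) key0
    push_cast at this
    rw [hp2, hp4] at this
    linarith
  have zkey1 : ∑ v ∈ S, (t v : ℤ) + (X ^ 2 + 1) * X = (X ^ 2 + 1) * X ^ 3 := by
    have := congrArg (fun m : ℕ => (m : ℤ)) key1
    push_cast at this
    rw [hp2, hp3] at this
    linarith
  have zkey2 : ∑ v ∈ S, (t v : ℤ) * (t v : ℤ) + (X ^ 2 + 1) * X
      + (X ^ 2 + 1) * X ^ 2 = (X ^ 2 + 1) * X ^ 3 + (X ^ 2 + 1) * X ^ 2 * X ^ 2 := by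
    have := congrArg (fun m : ℕ => (m : ℤ)) key2
    push_cast at this
    rw [hp2, hp3] at this
    linarith
  have hvar : ∑ v ∈ S, ((t v : ℤ) - (X + 1)) ^ 2 = 0 := by
    have hexp : ∀ v ∈ S, ((t v : ℤ) - (X + 1)) ^ 2
        = (t v : ℤ) * (t v : ℤ) - 2 * (X + 1) * (t v : ℤ) + (X + 1) ^ 2 :=
      fun v _ => by ring
    rw [Finset.sum_congr rfl hexp, Finset.sum_add_distrib, Finset.sum_sub_distrib,
      ← Finset.mul_sum, Finset.sum_const, nsmul_eq_mul]
    linear_combination zkey2 - 2 * (X + 1) * zkey1 + (X + 1) ^ 2 * zkey0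
  have hall : ∀ v ∈ S, ((t v : ℤ) - (X + 1)) ^ 2 = 0 := by
    intro v hv
    have hnn : ∀ w ∈ S, (0 : ℤ) ≤ ((t w : ℤ) - (X + 1)) ^ 2 := fun w _ => sq_nonneg _
    exact (Finset.sum_eq_zero_iff_of_nonneg hnn).1 hvar v hv
  intro v hv0 hvO
  have hvS : v ∈ S := by
    rw [hS, Finset.mem_filter]
    exact ⟨Finset.mem_univ v, hv0, hvO⟩
  have := hall v hvS
  rw [sq_eq_zero_iff, sub_eq_zero] at this
  have : (t v : ℤ) = (q : ℤ) ^ n + 1 := this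
  exact_mod_cast this

include hq hdim htan in
lemma hyperplane_count (hn : 1 ≤ n) (hcard : O.card = q ^ (2 * n) + 1)
    (H : Submodule F (Fin (4 * n) → F)) (hH : finrank F H = 4 * n - 1)
    (hHt : ∀ π ∈ O, ¬ τ π ≤ H) :
    (O.filter (fun π => π ≤ H)).card = q ^ n + 1 := by
  classical
  have hq2 : 2 ≤ q := by rw [← hq]; exact Fintype.one_lt_card
  set S : Finset (Fin (4 * n) → F) :=
    Finset.univ.filter (fun v => v ≠ 0 ∧ ∀ π ∈ O, v ∉ π) with hS
  have hfilt : ∀ W : Submodule F (Fin (4 * n) → F),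
      S.filter (fun v => v ∈ W) = Finset.univ.filter
        (fun v : Fin (4 * n) → F => (v ≠ 0 ∧ ∀ π ∈ O, v ∉ π) ∧ v ∈ W) := by
    intro W; rw [hS, Finset.filter_filter]
  set Sh : Finset (Fin (4 * n) → F) := S.filter (fun v => v ∈ H) with hSh
  set d : Submodule F (Fin (4 * n) → F) → ℕ := fun π => finrank F ↥(π ⊓ H) with hd
  -- E1 : master count for H
  have E1 : Sh.card + (∑ π ∈ O, q ^ (d π)) + 1 = q ^ (4 * n - 1) + O.card := by
    rw [hSh, hfilt]
    have := master_count hq O (ovoid_disj htan) H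
    rw [hH] at this
    exact this
  -- E2 : master count for τ π ⊓ H
  have E2 : ∀ π ∈ O, (Sh.filter (fun v => v ∈ τ π)).card + q ^ (d π)
      = q ^ (3 * n - 1) := by
    intro π hπ
    have hτH : finrank F ↥(τ π ⊓ H) = 3 * n - 1 := by
      have h1 := hyperplane_inter H (τ π) hH hn (hHt π hπ)
      rw [(htan π hπ).1] at h1
      omega
    have hm := master_count hq O (ovoid_disj htan) (τ π ⊓ H)
    rw [hτH] at hm
    have hsum : ∑ π' ∈ O, q ^ (finrank F ↥(π' ⊓ (τ π ⊓ H))) = q ^ (d π) + (O.card - 1) := by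
      rw [Finset.sum_eq_sum_sdiff_singleton_add hπ]
      have h1 : ∀ π' ∈ O \ {π}, q ^ (finrank F ↥(π' ⊓ (τ π ⊓ H))) = 1 := by
        intro π' hπ'
        rw [Finset.mem_sdiff, Finset.mem_singleton] at hπ'
        have hb : π' ⊓ (τ π ⊓ H) = ⊥ := by
          rw [← le_bot_iff, ← (htan π hπ).2.2 π' hπ'.1 hπ'.2]
          exact le_inf (le_trans inf_le_right inf_le_left) inf_le_left
        rw [hb, finrank_bot, pow_zero]
      rw [Finset.sum_congr rfl h1, Finset.sum_const, smul_eq_mul, mul_one,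
        Finset.card_sdiff_of_subset (by simpa using hπ), Finset.card_singleton]
      have h2 : π ⊓ (τ π ⊓ H) = π ⊓ H := by
        rw [← inf_assoc, inf_eq_left.2 (htan π hπ).2.1]
      rw [h2, hd, add_comm]
    rw [hsum] at hm
    have hfe : (Sh.filter (fun v => v ∈ τ π)) = Finset.univ.filter
        (fun v : Fin (4 * n) → F => (v ≠ 0 ∧ ∀ π' ∈ O, v ∉ π') ∧ v ∈ τ π ⊓ H) := by
      rw [hSh, hS]
      ext v
      simp only [Finset.mem_filter, Finset.mem_univ, true_and, Submodule.mem_inf]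
      tauto
    rw [hfe]
    have hO1 : 1 ≤ O.card := Finset.card_pos.2 ⟨π, hπ⟩
    omega
  -- E3 : each point of Sh lies on exactly q^n+1 tangents
  have E3 : (q ^ n + 1) * Sh.card = ∑ π ∈ O, (Sh.filter (fun v => v ∈ τ π)).card := by
    have dc : ∑ v ∈ Sh, (O.filter (fun π => v ∈ τ π)).card
        = ∑ π ∈ O, (Sh.filter (fun v => v ∈ τ π)).card := by
      simp only [Finset.card_filter]
      exact Finset.sum_comm
    rw [← dc]
    have hval : ∀ v ∈ Sh, (O.filter (fun π => v ∈ τ π)).card = q ^ n + 1 := by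
      intro v hv
      rw [hSh, Finset.mem_filter, hS, Finset.mem_filter] at hv
      exact tangent_count hq hdim htan hcard v hv.1.2.1 hv.1.2.2
    rw [Finset.sum_congr rfl hval, Finset.sum_const, smul_eq_mul, mul_comm]
  -- E4 : combine E2 and E3
  have E4 : (q ^ n + 1) * Sh.card + (∑ π ∈ O, q ^ (d π)) = O.card * q ^ (3 * n - 1) := by
    rw [E3, ← Finset.sum_add_distrib, Finset.sum_congr rfl E2, Finset.sum_const,
      smul_eq_mul]
  -- split the sum over O according to π ≤ H
  set hh : ℕ := (O.filter (fun π => π ≤ H)).card with hhh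
  set kk : ℕ := (O.filter (fun π => ¬ π ≤ H)).card with hkk
  have hk : hh + kk = O.card := Finset.card_filter_add_card_filter_not _
  have Ssumq : (∑ π ∈ O, q ^ (d π)) * q = hh * (q ^ n * q) + kk * q ^ n := by
    rw [← Finset.sum_filter_add_sum_filter_not O (fun π => π ≤ H) (fun π => q ^ (d π)),
      add_mul, Finset.sum_mul, Finset.sum_mul]
    congr 1
    · have h1 : ∀ π ∈ O.filter (fun π => π ≤ H), q ^ (d π) * q = q ^ n * q := by
        intro π hπ
        rw [Finset.mem_filter] at hπ
        have : π ⊓ H = π := inf_eq_left.2 hπ.2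
        rw [hd]; simp only []
        rw [this, hdim π hπ.1]
      rw [Finset.sum_congr rfl h1, Finset.sum_const, smul_eq_mul]
    · have h1 : ∀ π ∈ O.filter (fun π => ¬ π ≤ H), q ^ (d π) * q = q ^ n := by
        intro π hπ
        rw [Finset.mem_filter] at hπ
        have h2 := hyperplane_inter H π hH hn hπ.2
        rw [hdim π hπ.1] at h2
        rw [hd]; simp only []
        rw [← pow_succ, h2]
      rw [Finset.sum_congr rfl h1, Finset.sum_const, smul_eq_mul]
  -- pass to ℤ
  set X : ℤ := (q : ℤ) ^ n with hX
  set e : ℤ := (q : ℤ) with he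
  have hfY : ((q : ℕ) ^ (4 * n - 1) : ℤ) * e = X ^ 4 := by
    rw [he, hX]
    push_cast
    rw [← pow_succ, ← pow_mul]
    congr 1
    omega
  have hfB : ((q : ℕ) ^ (3 * n - 1) : ℤ) * e = X ^ 3 := by
    rw [he, hX]
    push_cast
    rw [← pow_succ, ← pow_mul]
    congr 1
    omega
  have hp2 : ((q : ℤ)) ^ (2 * n) = X ^ 2 := by rw [hX, ← pow_mul, mul_comm]
  have Z1 : (Sh.card : ℤ) + ((∑ π ∈ O, q ^ (d π) : ℕ) : ℤ) + 1
      = ((q : ℕ) ^ (4 * n - 1) : ℤ) + (X ^ 2 + 1) := by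
    rw [hcard] at E1
    have := congrArg (fun m : ℕ => (m : ℤ)) E1
    push_cast at this ⊢
    rw [hp2] at this
    linarith
  have Z2 : (X + 1) * (Sh.card : ℤ) + ((∑ π ∈ O, q ^ (d π) : ℕ) : ℤ)
      = (X ^ 2 + 1) * ((q : ℕ) ^ (3 * n - 1) : ℤ) := by
    rw [hcard] at E4
    have := congrArg (fun m : ℕ => (m : ℤ)) E4
    push_cast at this ⊢
    rw [hp2] at this
    rw [hX]
    linarith
  have Z3 : ((∑ π ∈ O, q ^ (d π) : ℕ) : ℤ) * e = (hh : ℤ) * (X * e) + (kk : ℤ) * X := by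
    have := congrArg (fun m : ℕ => (m : ℤ)) Ssumq
    push_cast at this
    rw [hX, he]
    exact_mod_cast this
  have Z4 : (hh : ℤ) + (kk : ℤ) = X ^ 2 + 1 := by
    rw [hcard] at hk
    have := congrArg (fun m : ℕ => (m : ℤ)) hk
    push_cast at this
    rw [hp2] at this
    linarith
  -- solve the linear system
  have hfinal : (hh : ℤ) * (X ^ 2 * (e - 1)) = (X + 1) * (X ^ 2 * (e - 1)) := by
    linear_combination e * (X + 1) * Z1 - e * Z2 - X * Z3 - X ^ 2 * Z4
      + (X + 1) * hfY - (X ^ 2 + 1) * hfB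
  have hXe : X ^ 2 * (e - 1) ≠ 0 := by
    have hepos : (0 : ℤ) < e := by
      rw [he]; exact_mod_cast (by omega : 0 < q)
    have hXpos : 0 < X := by rw [hX]; positivity
    have h2e : (2 : ℤ) ≤ e := by rw [he]; exact_mod_cast hq2
    have : 0 < X ^ 2 * (e - 1) := by
      apply mul_pos (by positivity)
      omega
    omega
  have : (hh : ℤ) = X + 1 := mul_right_cancel₀ hXe hfinal
  rw [hX, he] at this
  exact_mod_cast this

end Ovoid

/-- A pseudo-ovoid of `PG(4n−1,q)` with tangent-space function `τ`: a set `O` of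
`q^{2n} + 1` subspaces of `F_q^{4n}`, each of vector-space dimension `n`, such that
any three distinct members span a subspace of dimension `3n`, and for each `π ∈ O`
the subspace `τ π` has dimension `3n`, contains `π`, and meets every other element
of `O` trivially (`τ π` is the tangent space of `O` at `π`). -/
def IsPseudoOvoid (n q : ℕ) (F : Type) [Field F]
    (O : Finset (Submodule F (Fin (4 * n) → F)))
    (τ : Submodule F (Fin (4 * n) → F) → Submodule F (Fin (4 * n) → F)) : Prop :=
  O.card = q ^ (2 * n) + 1 ∧
  (∀ W ∈ O, Module.finrank F W = n) ∧
  (∀ W₁ ∈ O, ∀ W₂ ∈ O, ∀ W₃ ∈ O, W₁ ≠ W₂ → W₁ ≠ W₃ → W₂ ≠ W₃ →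
    Module.finrank F ↥(W₁ ⊔ W₂ ⊔ W₃) = 3 * n) ∧
  (∀ π ∈ O, Module.finrank F (τ π) = 3 * n ∧ π ≤ τ π ∧
    ∀ π' ∈ O, π' ≠ π → τ π ⊓ π' = ⊥)

/-- Payne–Thas: let `O` be a pseudo-ovoid of `PG(4n−1,q)`.  Then (i) every hyperplane
(subspace of `F_q^{4n}` of dimension `4n−1`) containing no tangent space of `O`
contains exactly `qⁿ + 1` elements of `O`; and (ii) every 1-dimensional subspace of
`F_q^{4n}` not contained in any element of `O` lies in exactly `qⁿ + 1` tangent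
spaces of `O`. -/
theorem pseudo_ovoid_hyperplane_and_point_counts (n q : ℕ) (hn : 1 ≤ n)
    (F : Type) [Field F] [Fintype F] (hq : Fintype.card F = q)
    (O : Finset (Submodule F (Fin (4 * n) → F)))
    (τ : Submodule F (Fin (4 * n) → F) → Submodule F (Fin (4 * n) → F))
    (hO : IsPseudoOvoid n q F O τ) :
    (∀ H : Submodule F (Fin (4 * n) → F), Module.finrank F H = 4 * n - 1 →
      (∀ π ∈ O, ¬ τ π ≤ H) →
      {π ∈ (O : Set (Submodule F (Fin (4 * n) → F))) | π ≤ H}.ncard = q ^ n + 1) ∧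
    (∀ L : Submodule F (Fin (4 * n) → F), Module.finrank F L = 1 →
      (∀ π ∈ O, ¬ L ≤ π) →
      {π ∈ (O : Set (Submodule F (Fin (4 * n) → F))) | L ≤ τ π}.ncard = q ^ n + 1) := by
  classical
  obtain ⟨hcard, hdim, _h3, htan⟩ := hO
  constructor
  · intro H hH hHt
    have hset : {π ∈ (O : Set (Submodule F (Fin (4 * n) → F))) | π ≤ H}
        = ↑(O.filter (fun π => π ≤ H)) := by
      ext π; simp
    rw [hset, Set.ncard_coe_finset]
    exact hyperplane_count hq hdim htan hn hcard H hH hHt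
  · intro L hL hLt
    have hLne : L ≠ ⊥ := by
      intro h
      rw [h, finrank_bot] at hL
      omega
    obtain ⟨v, hvL, hv0⟩ := Submodule.exists_mem_ne_zero_of_ne_bot hLne
    have hspan : Submodule.span F {v} = L := by
      apply Submodule.eq_of_le_of_finrank_le
        ((Submodule.span_singleton_le_iff_mem v L).2 hvL)
      rw [hL, finrank_span_singleton hv0]
    have hmem : ∀ W : Submodule F (Fin (4 * n) → F), L ≤ W ↔ v ∈ W := by
      intro W
      constructor
      · exact fun h => h hvL
      · intro h
        rw [← hspan]
        exact (Submodule.span_singleton_le_iff_mem v W).2 h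
    have hvO : ∀ π ∈ O, v ∉ π := by
      intro π hπ hvπ
      exact hLt π hπ ((hmem π).2 hvπ)
    have hset : {π ∈ (O : Set (Submodule F (Fin (4 * n) → F))) | L ≤ τ π}
        = ↑(O.filter (fun π => v ∈ τ π)) := by
      ext π
      simp only [Set.mem_setOf_eq, Finset.coe_filter, Finset.mem_coe]
      rw [hmem]
    rw [hset, Set.ncard_coe_finset]
    exact tangent_count hq hdim htan hcard v hv0 hvO
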